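/- Let B be an m × 3 complex matrix of rank 3, and suppose there exist three vectors p, q, w ∈ ℂ³ such that every row of B is a scalar multiple of p, of q, or of w. Then there exists a ℂ-subspace W of Fin m → ℂ of dimension 3 such that (fun x i => (x i)^2) '' {B.mulVec v | v : Fin 3 → ℂ} = W. (If the point configuration of a plane in ℙ^n consists of exactly three points, the coordinate-wise square of the plane is again a plane.) -/

import Mathlib

open Matrix

/-- If the point configuration of a plane consists of exactly three points (every row
of the rank-3 matrix `B` is proportional to one of three fixed vectors), then the
coordinate-wise square of the plane is again a plane: the image of its affine cone
under coordinate-wise squaring is a `3`-dimensional linear subspace. -/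
theorem square_of_plane_three_points (m : ℕ) (B : Matrix (Fin m) (Fin 3) ℂ)
    (hrank : B.rank = 3) (p q w : Fin 3 → ℂ)
    (h : ∀ i, (∃ c : ℂ, (fun j => B i j) = c • p) ∨
        (∃ c : ℂ, (fun j => B i j) = c • q) ∨
        (∃ c : ℂ, (fun j => B i j) = c • w)) :
    ∃ W : Submodule ℂ (Fin m → ℂ), Module.finrank ℂ W = 3 ∧
      (fun x : Fin m → ℂ => fun i => (x i) ^ 2) ''
          {y : Fin m → ℂ | ∃ v : Fin 3 → ℂ, y = B.mulVec v}
        = (W : Set (Fin m → ℂ)) := by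
  classical
  set P : Matrix (Fin 3) (Fin 3) ℂ := Matrix.of ![p, q, w] with hPdef
  have hch : ∀ i, ∃ k : Fin 3, ∃ c : ℂ, B i = c • P k := by
    intro i
    rcases h i with ⟨c, hc⟩ | ⟨c, hc⟩ | ⟨c, hc⟩
    exacts [⟨0, c, hc⟩, ⟨1, c, hc⟩, ⟨2, c, hc⟩]
  choose cls co hco using hch
  -- the row space of `B` has dimension 3
  have hrows : Module.finrank ℂ (Submodule.span ℂ (Set.range B)) = 3 := by
    have := Matrix.rank_eq_finrank_span_row B; rw [hrank] at this; exact this.symm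
  -- rows of `B` lie in the span of the rows of `P`
  have hsub : Submodule.span ℂ (Set.range B) ≤ Submodule.span ℂ (Set.range (fun k => P k)) := by
    rw [Submodule.span_le]
    rintro x ⟨i, rfl⟩
    rw [hco i]
    exact Submodule.smul_mem _ _ (Submodule.subset_span ⟨cls i, rfl⟩)
  -- the rows of `P` are linearly independent
  have hPli : LinearIndependent ℂ (fun k => P k) := by
    rw [linearIndependent_iff_card_eq_finrank_span, Set.finrank]
    have h1 : Module.finrank ℂ (Submodule.span ℂ (Set.range (fun k => P k))) ≤ 3 := by
      have := Submodule.finrank_le (Submodule.span ℂ (Set.range (fun k => P k)))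
      simpa using this
    have h2 : 3 ≤ Module.finrank ℂ (Submodule.span ℂ (Set.range (fun k => P k))) := by
      have h2' := Submodule.finrank_mono hsub
      rwa [hrows] at h2'
    simp only [Fintype.card_fin]
    omega
  -- span of rows of B = span of rows of P, hence each P k is in the row space
  have hspan_eq : Submodule.span ℂ (Set.range B)
      = Submodule.span ℂ (Set.range (fun k => P k)) := by
    apply Submodule.eq_of_le_of_finrank_le hsub
    rw [hrows, finrank_span_eq_card hPli, Fintype.card_fin]
  -- each class contains a row with nonzero coefficient
  have hclass : ∀ k : Fin 3, ∃ i, cls i = k ∧ co i ≠ 0 := by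
    intro k
    by_contra hk
    push_neg at hk
    have hPk : P k ∈ Submodule.span ℂ ((fun k => P k) '' {k}ᶜ) := by
      have : P k ∈ Submodule.span ℂ (Set.range B) := by
        rw [hspan_eq]; exact Submodule.subset_span ⟨k, rfl⟩
      refine Submodule.span_le.mpr ?_ (hspan_eq ▸ this : P k ∈ Submodule.span ℂ (Set.range B))
      rintro x ⟨i, rfl⟩
      rw [hco i]
      by_cases hik : cls i = k
      · rw [hk i hik, zero_smul]; exact Submodule.zero_mem _
      · exact Submodule.smul_mem _ _ (Submodule.subset_span ⟨cls i, hik, rfl⟩)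
    exact hPli.notMem_span_image (by simp : k ∉ ({k}ᶜ : Set (Fin 3))) hPk
  -- the three squared "class indicator" vectors
  set e : Fin 3 → (Fin m → ℂ) := fun k i => if cls i = k then (co i) ^ 2 else 0 with he
  -- key computation: the square of B.mulVec v is a combination of the e k
  have hsq : ∀ (v : Fin 3 → ℂ) (i : Fin m),
      (B.mulVec v i) ^ 2 = ∑ k, ((P k ⬝ᵥ v) ^ 2) * e k i := by
    intro v i
    have : B.mulVec v i = co i * (P (cls i) ⬝ᵥ v) := by
      simp only [Matrix.mulVec, hco i]
      simp [dotProduct, Finset.mul_sum, mul_assoc]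
    rw [this, Finset.sum_eq_single (cls i)]
    · simp [he, mul_pow]; ring
    · intro k _ hk; simp [he, Ne.symm hk]
    · simp
  -- linear independence of e
  have heli : LinearIndependent ℂ e := by
    rw [Fintype.linearIndependent_iff]
    intro g hg k
    obtain ⟨i, hik, hco0⟩ := hclass k
    have := congrFun hg i
    simp only [Finset.sum_apply, Pi.smul_apply, smul_eq_mul, Pi.zero_apply] at this
    rw [Finset.sum_eq_single k] at this
    · simp only [he, hik, if_pos rfl] at this
      rcases mul_eq_zero.mp this with h' | h'
      · exact h'
      · exact absurd (pow_eq_zero_iff (by norm_num) |>.mp h') hco0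
    · intro k' _ hk'; simp [he, hik, Ne.symm hk']
    · simp
  refine ⟨Submodule.span ℂ (Set.range e), ?_, ?_⟩
  · rw [finrank_span_eq_card heli, Fintype.card_fin]
  · ext x
    constructor
    · rintro ⟨y, ⟨v, rfl⟩, rfl⟩
      rw [SetLike.mem_coe, Submodule.mem_span_range_iff_exists_fun]
      refine ⟨fun k => (P k ⬝ᵥ v) ^ 2, ?_⟩
      funext i
      simp only [Finset.sum_apply, Pi.smul_apply, smul_eq_mul]
      exact (hsq v i).symm
    · intro hx
      rw [SetLike.mem_coe, Submodule.mem_span_range_iff_exists_fun] at hx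
      obtain ⟨a, ha⟩ := hx
      -- choose square roots
      have hs : ∀ k : Fin 3, ∃ s : ℂ, s ^ 2 = a k := fun k =>
        IsAlgClosed.exists_pow_nat_eq (a k) (by norm_num)
      choose s hsk using hs
      -- P is invertible
      have hPu : IsUnit P := Matrix.linearIndependent_rows_iff_isUnit.mp hPli
      have hPdet : IsUnit P.det := hPu.map (Matrix.detMonoidHom)
      set v : Fin 3 → ℂ := P⁻¹.mulVec s with hv
      have hPv : P.mulVec v = s := by
        rw [hv, Matrix.mulVec_mulVec, Matrix.mul_nonsing_inv _ hPdet, Matrix.one_mulVec]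
      refine ⟨B.mulVec v, ⟨v, rfl⟩, ?_⟩
      funext i
      show (B.mulVec v i) ^ 2 = x i
      rw [hsq v i, ← congrFun ha i]
      simp only [Finset.sum_apply, Pi.smul_apply, smul_eq_mul]
      refine Finset.sum_congr rfl fun k _ => ?_
      have : P k ⬝ᵥ v = s k := congrFun hPv k
      rw [this, hsk]
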